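/- Expectation of a product of two Gaussian kernels over a joint Gaussian input: with K_k, K_l Gaussian kernels and (z^k, z^l) jointly Gaussian with stacked mean m_Z and covariance S_{ZZ}, E[K_k(z^k, z_i^k) K_l(z^l, z_j^l)] = σ_k² σ_l² |I + S_{ZZ} Λ⁻¹|^{-1/2} exp(−(1/2)(Z_{ij} − m_Z)ᵀ(Λ + S_{ZZ})⁻¹(Z_{ij} − m_Z)), where Λ = blkdiag(Λ^k, Λ^l) and Z_{ij} = (z_i^k, z_j^l). -/

import Mathlib

open Matrix MeasureTheory Real

/-- Multivariate Gaussian probability density on `ι → ℝ` with mean `m` and covariance `S`. -/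
noncomputable def gpdf {ι : Type} [Fintype ι] [DecidableEq ι] (m : ι → ℝ) (S : Matrix ι ι ℝ) (x : ι → ℝ) : ℝ :=
  (2 * Real.pi) ^ (-(Fintype.card ι : ℝ) / 2) * S.det ^ (-(1 : ℝ) / 2) *
    Real.exp (-(1 / 2) * ((x - m) ⬝ᵥ (S⁻¹ *ᵥ (x - m))))


set_option linter.unusedSectionVars false
set_option linter.unusedVariables false

section aux
variable {ι : Type} [Fintype ι] [DecidableEq ι]

lemma psd_det_nonneg {A : Matrix ι ι ℝ} (hA : A.PosSemidef) : 0 ≤ A.det := by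
  rw [hA.1.det_eq_prod_eigenvalues]
  exact Finset.prod_nonneg fun i _ => hA.eigenvalues_nonneg i

lemma herm_transpose {A : Matrix ι ι ℝ} (hA : A.IsHermitian) : Aᵀ = A := by
  simpa [Matrix.IsHermitian, Matrix.conjTranspose_eq_transpose_of_trivial] using hA.eq

lemma bil_symm {M : Matrix ι ι ℝ} (hM : Mᵀ = M) (x y : ι → ℝ) :
    (M *ᵥ x) ⬝ᵥ y = x ⬝ᵥ (M *ᵥ y) := by
  rw [Matrix.dotProduct_mulVec x M y, ← Matrix.mulVec_transpose, hM, dotProduct_comm]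

lemma bil_comm {M : Matrix ι ι ℝ} (hM : Mᵀ = M) (x y : ι → ℝ) :
    y ⬝ᵥ (M *ᵥ x) = x ⬝ᵥ (M *ᵥ y) := by
  rw [← bil_symm hM x y, dotProduct_comm]

lemma expand_quad {M : Matrix ι ι ℝ} (hM : Mᵀ = M) (x y : ι → ℝ) :
    (x - y) ⬝ᵥ (M *ᵥ (x - y))
      = x ⬝ᵥ (M *ᵥ x) - 2 * (x ⬝ᵥ (M *ᵥ y)) + y ⬝ᵥ (M *ᵥ y) := by
  have hc : y ⬝ᵥ (M *ᵥ x) = x ⬝ᵥ (M *ᵥ y) := bil_comm hM x y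
  rw [Matrix.mulVec_sub, dotProduct_sub, sub_dotProduct, sub_dotProduct, hc]
  ring

lemma block_quad {κ₁ κ₂ : Type} [Fintype κ₁] [Fintype κ₂]
    (P : Matrix κ₁ κ₁ ℝ) (Q : Matrix κ₂ κ₂ ℝ) (u : κ₁ ⊕ κ₂ → ℝ) :
    u ⬝ᵥ (Matrix.fromBlocks P 0 0 Q *ᵥ u)
      = (u ∘ Sum.inl) ⬝ᵥ (P *ᵥ (u ∘ Sum.inl)) + (u ∘ Sum.inr) ⬝ᵥ (Q *ᵥ (u ∘ Sum.inr)) := by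
  rw [Matrix.fromBlocks_mulVec]
  simp only [Matrix.zero_mulVec, add_zero, zero_add]
  conv_lhs => rw [← Sum.elim_comp_inl_inr u]
  rw [sumElim_dotProduct_sumElim]
  simp

lemma fromBlocks_posDef {κ₁ κ₂ : Type} [Fintype κ₁] [Fintype κ₂] [DecidableEq κ₁] [DecidableEq κ₂]
    {P : Matrix κ₁ κ₁ ℝ} {Q : Matrix κ₂ κ₂ ℝ} (hP : P.PosDef) (hQ : Q.PosDef) :
    (Matrix.fromBlocks P 0 0 Q).PosDef := by
  apply Matrix.PosDef.of_dotProduct_mulVec_pos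
  · show (Matrix.fromBlocks P 0 0 Q)ᴴ = _
    rw [Matrix.fromBlocks_conjTranspose, hP.1.eq, hQ.1.eq]
    simp
  · intro x hx
    have hstar : (star x : κ₁ ⊕ κ₂ → ℝ) = x := by simp
    rw [hstar, block_quad]
    have hcase : x ∘ Sum.inl ≠ 0 ∨ x ∘ Sum.inr ≠ 0 := by
      by_contra h
      push_neg at h
      apply hx
      funext i
      cases i with
      | inl a => exact congrFun h.1 a
      | inr a => exact congrFun h.2 a
    have h1 : ∀ v : κ₁ → ℝ, 0 ≤ v ⬝ᵥ (P *ᵥ v) := fun v => by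
      simpa using hP.posSemidef.dotProduct_mulVec_nonneg v
    have h2 : ∀ v : κ₂ → ℝ, 0 ≤ v ⬝ᵥ (Q *ᵥ v) := fun v => by
      simpa using hQ.posSemidef.dotProduct_mulVec_nonneg v
    rcases hcase with h | h
    · exact add_pos_of_pos_of_nonneg (by simpa using hP.dotProduct_mulVec_pos h) (h2 _)
    · exact add_pos_of_nonneg_of_pos (h1 _) (by simpa using hQ.dotProduct_mulVec_pos h)

lemma gauss_std : ∫ x : ι → ℝ, Real.exp (-(1/2) * (x ⬝ᵥ x))
    = (2*π) ^ ((Fintype.card ι : ℝ)/2) := by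
  have h1 : ∀ x : ι → ℝ, Real.exp (-(1/2) * (x ⬝ᵥ x)) =
      ∏ i, Real.exp (-(1/2) * (x i * x i)) := by
    intro x
    rw [← Real.exp_sum]
    congr 1
    simp [dotProduct, Finset.mul_sum]
  simp_rw [h1]
  rw [MeasureTheory.integral_fintype_prod_volume_eq_pow (fun t : ℝ => Real.exp (-(1/2) * (t*t)))]
  have h2 : ∫ t : ℝ, Real.exp (-(1/2) * (t*t)) = Real.sqrt (2*π) := by
    have := integral_gaussian (1/2 : ℝ)
    simp_rw [show ∀ t:ℝ, -(1/2:ℝ) * (t*t) = -(1/2) * t^2 by intro t; ring]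
    rw [this, show π / (1/2 : ℝ) = 2 * π by ring]
  rw [h2, Real.sqrt_eq_rpow, ← Real.rpow_natCast ((2*π) ^ ((1:ℝ)/2)) _,
    ← Real.rpow_mul (by positivity)]
  congr 1
  ring

open scoped MatrixOrder in
lemma gauss_quad {M : Matrix ι ι ℝ} (hM : M.PosDef) (c : ι → ℝ) :
    ∫ x : ι → ℝ, Real.exp (-(1/2) * ((x - c) ⬝ᵥ (M *ᵥ (x - c))))
      = (2*π) ^ ((Fintype.card ι : ℝ)/2) * M.det ^ (-(1:ℝ)/2) := by
  have htr : ∫ x : ι → ℝ, Real.exp (-(1/2) * ((x - c) ⬝ᵥ (M *ᵥ (x - c))))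
      = ∫ x : ι → ℝ, Real.exp (-(1/2) * (x ⬝ᵥ (M *ᵥ x))) :=
    integral_sub_right_eq_self (fun x => Real.exp (-(1/2) * (x ⬝ᵥ (M *ᵥ x)))) c
  rw [htr]
  set T := CFC.sqrt M with hT
  have hTT : T * T = M := CFC.sqrt_mul_sqrt_self M hM.posSemidef.nonneg
  have hTherm : Tᵀ = T := herm_transpose (CFC.sqrt_nonneg M).posSemidef.1
  have hdetT : T.det * T.det = M.det := by rw [← Matrix.det_mul, hTT]
  have hdetTnn : 0 ≤ T.det := psd_det_nonneg (CFC.sqrt_nonneg M).posSemidef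
  have hdetM : 0 < M.det := hM.det_pos
  have hdetT0 : T.det ≠ 0 := by
    intro h; rw [h, mul_zero] at hdetT; exact hdetM.ne hdetT
  have hdetTpos : 0 < T.det := lt_of_le_of_ne hdetTnn (Ne.symm hdetT0)
  have hdetT' : T.det = Real.sqrt M.det := by
    rw [← hdetT, Real.sqrt_mul_self hdetTnn]
  have hq : ∀ x : ι → ℝ, x ⬝ᵥ (M *ᵥ x) = (T *ᵥ x) ⬝ᵥ (T *ᵥ x) := by
    intro x
    rw [← hTT, ← Matrix.mulVec_mulVec, Matrix.dotProduct_mulVec, ← Matrix.mulVec_transpose,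
      hTherm]
  simp_rw [hq]
  set f : (ι → ℝ) →ₗ[ℝ] (ι → ℝ) := Matrix.toLin' T with hf
  have hdf : LinearMap.det f = T.det := by rw [hf, LinearMap.det_toLin']
  have hdf0 : LinearMap.det f ≠ 0 := by rw [hdf]; exact hdetTpos.ne'
  have hmap : Measure.map f volume = ENNReal.ofReal |(LinearMap.det f)⁻¹| • volume :=
    Measure.map_linearMap_addHaar_eq_smul_addHaar volume hdf0
  have hcont : Continuous f := f.continuous_of_finiteDimensional
  have hg : Continuous fun y : ι → ℝ => Real.exp (-(1/2) * (y ⬝ᵥ y)) := by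
    apply Real.continuous_exp.comp
    apply Continuous.mul continuous_const
    exact continuous_finset_sum _ fun i _ => ((continuous_apply i).mul (continuous_apply i))
  have key : ∫ x : ι → ℝ, Real.exp (-(1/2) * ((T *ᵥ x) ⬝ᵥ (T *ᵥ x)))
      = |(LinearMap.det f)⁻¹| * ∫ y : ι → ℝ, Real.exp (-(1/2) * (y ⬝ᵥ y)) := by
    have h1 : ∫ x : ι → ℝ, Real.exp (-(1/2) * ((T *ᵥ x) ⬝ᵥ (T *ᵥ x)))
        = ∫ y : ι → ℝ, Real.exp (-(1/2) * (y ⬝ᵥ y)) ∂(Measure.map f volume) := by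
      rw [integral_map hcont.aemeasurable hg.aestronglyMeasurable]
      simp [f, Matrix.toLin'_apply]
    rw [h1, hmap, integral_smul_measure, ENNReal.toReal_ofReal (abs_nonneg _), smul_eq_mul]
  rw [key, gauss_std, hdf, hdetT']
  have h2 : |(Real.sqrt M.det)⁻¹| = M.det ^ (-(1:ℝ)/2) := by
    rw [abs_of_pos (by positivity), Real.sqrt_eq_rpow,
      ← Real.rpow_neg_one ((M.det) ^ ((1:ℝ)/2)), ← Real.rpow_mul hdetM.le]
    norm_num
  rw [h2, mul_comm]

end aux


/-- Expectation of a product of two Gaussian kernels over a jointly Gaussian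
input `Z = (z^k, z^l)`:
`E[K_k(z^k,z_i^k) K_l(z^l,z_j^l)] = σ_k²σ_l² |I + S_ZZ Λ⁻¹|^{-1/2}
exp(−½ (Z_ij − m_Z)ᵀ(Λ+S_ZZ)⁻¹(Z_ij − m_Z))` with `Λ = blkdiag(Λ^k, Λ^l)`. -/
theorem stmt10 (dk dl : ℕ)
    (mZ : (Fin dk ⊕ Fin dl) → ℝ) (SZZ : Matrix (Fin dk ⊕ Fin dl) (Fin dk ⊕ Fin dl) ℝ)
    (hSZZ : SZZ.PosDef)
    (Lamk : Matrix (Fin dk) (Fin dk) ℝ) (Laml : Matrix (Fin dl) (Fin dl) ℝ)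
    (hLamk : Lamk.PosDef) (hLaml : Laml.PosDef)
    (hsum : (Matrix.fromBlocks Lamk 0 0 Laml + SZZ).PosDef)
    (sigk2 sigl2 : ℝ) (hsigk : 0 < sigk2) (hsigl : 0 < sigl2)
    (zik : Fin dk → ℝ) (zjl : Fin dl → ℝ) :
    (∫ w : (Fin dk ⊕ Fin dl) → ℝ,
        gpdf mZ SZZ w *
          ((sigk2 * Real.exp (-(1 / 2) *
              (((fun a => w (Sum.inl a)) - zik) ⬝ᵥ
                (Lamk⁻¹ *ᵥ ((fun a => w (Sum.inl a)) - zik))))) *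
            (sigl2 * Real.exp (-(1 / 2) *
              (((fun a => w (Sum.inr a)) - zjl) ⬝ᵥ
                (Laml⁻¹ *ᵥ ((fun a => w (Sum.inr a)) - zjl)))))))
      = sigk2 * sigl2 *
          ((1 : Matrix (Fin dk ⊕ Fin dl) (Fin dk ⊕ Fin dl) ℝ) +
              SZZ * (Matrix.fromBlocks Lamk 0 0 Laml)⁻¹).det ^ (-(1 : ℝ) / 2) *
          Real.exp (-(1 / 2) *
            ((Sum.elim zik zjl - mZ) ⬝ᵥ
              ((Matrix.fromBlocks Lamk 0 0 Laml + SZZ)⁻¹ *ᵥ (Sum.elim zik zjl - mZ)))) := by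
  set Lam := Matrix.fromBlocks Lamk 0 0 Laml with hLamdef
  set Z := Sum.elim zik zjl with hZdef
  have hLam : Lam.PosDef := fromBlocks_posDef hLamk hLaml
  set A := SZZ⁻¹ with hAdef
  set Bm := Lam⁻¹ with hBdef
  have hApos : A.PosDef := hSZZ.inv
  have hBpos : Bm.PosDef := hLam.inv
  have hABpos : (A + Bm).PosDef := hApos.add hBpos
  set E := (A + Bm)⁻¹ with hEdef
  set D := (Lam + SZZ)⁻¹ with hDdef
  have hDpos : D.PosDef := hsum.inv
  have hEpos : E.PosDef := hABpos.inv
  -- transposes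
  have hAt : Aᵀ = A := herm_transpose hApos.1
  have hBt : Bmᵀ = Bm := herm_transpose hBpos.1
  have hEt : Eᵀ = E := herm_transpose hEpos.1
  have hDt : Dᵀ = D := herm_transpose hDpos.1
  have hABt : (A + Bm)ᵀ = A + Bm := herm_transpose hABpos.1
  -- inverse products
  have hSA : SZZ * A = 1 := Matrix.mul_nonsing_inv _ hSZZ.det_pos.ne'.isUnit
  have hAS : A * SZZ = 1 := Matrix.nonsing_inv_mul _ hSZZ.det_pos.ne'.isUnit
  have hLB : Lam * Bm = 1 := Matrix.mul_nonsing_inv _ hLam.det_pos.ne'.isUnit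
  have hBL : Bm * Lam = 1 := Matrix.nonsing_inv_mul _ hLam.det_pos.ne'.isUnit
  have hABE : (A + Bm) * E = 1 := Matrix.mul_nonsing_inv _ hABpos.det_pos.ne'.isUnit
  have hEAB : E * (A + Bm) = 1 := Matrix.nonsing_inv_mul _ hABpos.det_pos.ne'.isUnit
  -- D = A * E * Bm
  have hLS : Lam * (A + Bm) * SZZ = Lam + SZZ := by
    rw [Matrix.mul_add, Matrix.add_mul, Matrix.mul_assoc Lam A SZZ, hAS, hLB, mul_one, one_mul]
  have hAEB_LS : (A * E * Bm) * (Lam + SZZ) = 1 := by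
    rw [← hLS]
    simp only [← Matrix.mul_assoc]
    rw [Matrix.mul_assoc (A * E) Bm Lam, hBL, mul_one, Matrix.mul_assoc A E (A + Bm), hEAB,
      mul_one, hAS]
  have hD_eq : D = A * E * Bm := by
    rw [hDdef]; exact Matrix.inv_eq_left_inv hAEB_LS
  have hBEA : Bm * E * A = D := by
    have h := congrArg Matrix.transpose hD_eq
    rw [Matrix.transpose_mul, Matrix.transpose_mul, hAt, hBt, hEt, hDt] at h
    rw [h, Matrix.mul_assoc]
  have hAEA : A * E * A = A - D := by
    have h1 : A * E * (A + Bm) = A := by rw [Matrix.mul_assoc, hEAB, mul_one]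
    rw [Matrix.mul_add] at h1
    rw [hD_eq]; exact eq_sub_of_add_eq h1
  have hBEB : Bm * E * Bm = Bm - D := by
    have h1 : Bm * E * (A + Bm) = Bm := by rw [Matrix.mul_assoc, hEAB, mul_one]
    rw [Matrix.mul_add] at h1
    have h2 : Bm * E * Bm + Bm * E * A = Bm := by rw [add_comm]; exact h1
    rw [← hBEA]; exact eq_sub_of_add_eq h2
  -- center
  set u := A *ᵥ mZ + Bm *ᵥ Z with hudef
  set cc := E *ᵥ u with hccdef
  have hABc : (A + Bm) *ᵥ cc = u := by
    rw [hccdef, Matrix.mulVec_mulVec, hABE, Matrix.one_mulVec]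
  have t1 : (A *ᵥ mZ) ⬝ᵥ (E *ᵥ (A *ᵥ mZ)) = mZ ⬝ᵥ (A *ᵥ mZ) - mZ ⬝ᵥ (D *ᵥ mZ) := by
    rw [bil_symm hAt, Matrix.mulVec_mulVec, Matrix.mulVec_mulVec, hAEA, Matrix.sub_mulVec,
      dotProduct_sub]
  have t2 : (A *ᵥ mZ) ⬝ᵥ (E *ᵥ (Bm *ᵥ Z)) = Z ⬝ᵥ (D *ᵥ mZ) := by
    rw [bil_symm hAt, Matrix.mulVec_mulVec, Matrix.mulVec_mulVec, ← hD_eq]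
    exact bil_comm hDt Z mZ
  have t3 : (Bm *ᵥ Z) ⬝ᵥ (E *ᵥ (A *ᵥ mZ)) = Z ⬝ᵥ (D *ᵥ mZ) := by
    rw [bil_symm hBt, Matrix.mulVec_mulVec, Matrix.mulVec_mulVec, hBEA]
  have t4 : (Bm *ᵥ Z) ⬝ᵥ (E *ᵥ (Bm *ᵥ Z)) = Z ⬝ᵥ (Bm *ᵥ Z) - Z ⬝ᵥ (D *ᵥ Z) := by
    rw [bil_symm hBt, Matrix.mulVec_mulVec, Matrix.mulVec_mulVec, hBEB, Matrix.sub_mulVec,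
      dotProduct_sub]
  have hcu : cc ⬝ᵥ ((A + Bm) *ᵥ cc)
      = mZ ⬝ᵥ (A *ᵥ mZ) + Z ⬝ᵥ (Bm *ᵥ Z) - mZ ⬝ᵥ (D *ᵥ mZ) + 2 * (Z ⬝ᵥ (D *ᵥ mZ))
        - Z ⬝ᵥ (D *ᵥ Z) := by
    rw [hABc, hccdef, bil_symm hEt, hudef, Matrix.mulVec_add, dotProduct_add,
      add_dotProduct, add_dotProduct, t1, t2, t3, t4]
    ring
  have f2 : ∀ w : (Fin dk ⊕ Fin dl) → ℝ,
      w ⬝ᵥ ((A + Bm) *ᵥ cc) = w ⬝ᵥ (A *ᵥ mZ) + w ⬝ᵥ (Bm *ᵥ Z) := by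
    intro w; rw [hABc, hudef, dotProduct_add]
  have hsquare : ∀ w : (Fin dk ⊕ Fin dl) → ℝ,
      (w - mZ) ⬝ᵥ (A *ᵥ (w - mZ)) + (w - Z) ⬝ᵥ (Bm *ᵥ (w - Z))
        = (w - cc) ⬝ᵥ ((A + Bm) *ᵥ (w - cc)) + (Z - mZ) ⬝ᵥ (D *ᵥ (Z - mZ)) := by
    intro w
    rw [expand_quad hAt, expand_quad hBt, expand_quad hABt, expand_quad hDt,
      show w ⬝ᵥ ((A + Bm) *ᵥ w) = w ⬝ᵥ (A *ᵥ w) + w ⬝ᵥ (Bm *ᵥ w) by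
        rw [Matrix.add_mulVec, dotProduct_add],
      f2 w, hcu]
    have hzm : Z ⬝ᵥ (D *ᵥ mZ) = mZ ⬝ᵥ (D *ᵥ Z) := bil_comm hDt mZ Z
    ring
  -- block structure of the kernels
  have hLaminv : Bm = Matrix.fromBlocks Lamk⁻¹ 0 0 Laml⁻¹ := by
    rw [hBdef, hLamdef]
    refine (Matrix.inv_eq_left_inv ?_)
    rw [Matrix.fromBlocks_multiply]
    simp [Matrix.nonsing_inv_mul Lamk hLamk.det_pos.ne'.isUnit,
      Matrix.nonsing_inv_mul Laml hLaml.det_pos.ne'.isUnit, Matrix.fromBlocks_one]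
  have hker : ∀ w : (Fin dk ⊕ Fin dl) → ℝ,
      ((fun a => w (Sum.inl a)) - zik) ⬝ᵥ (Lamk⁻¹ *ᵥ ((fun a => w (Sum.inl a)) - zik))
        + ((fun a => w (Sum.inr a)) - zjl) ⬝ᵥ (Laml⁻¹ *ᵥ ((fun a => w (Sum.inr a)) - zjl))
      = (w - Z) ⬝ᵥ (Bm *ᵥ (w - Z)) := by
    intro w
    rw [hLaminv, block_quad]
    have h1 : (w - Z) ∘ Sum.inl = (fun a => w (Sum.inl a)) - zik := by
      funext a; simp [hZdef]
    have h2 : (w - Z) ∘ Sum.inr = (fun a => w (Sum.inr a)) - zjl := by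
      funext a; simp [hZdef]
    rw [h1, h2]
  -- the constant
  set nn : ℝ := (Fintype.card (Fin dk ⊕ Fin dl) : ℝ) with hnn
  set K : ℝ := sigk2 * sigl2 * (2 * π) ^ (-nn / 2) * SZZ.det ^ (-(1:ℝ) / 2) *
      Real.exp (-(1 / 2) * ((Z - mZ) ⬝ᵥ (D *ᵥ (Z - mZ)))) with hKdef
  -- pointwise identity for the integrand
  have hpoint : ∀ w : (Fin dk ⊕ Fin dl) → ℝ,
      gpdf mZ SZZ w *
          ((sigk2 * Real.exp (-(1 / 2) *
              (((fun a => w (Sum.inl a)) - zik) ⬝ᵥ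
                (Lamk⁻¹ *ᵥ ((fun a => w (Sum.inl a)) - zik))))) *
            (sigl2 * Real.exp (-(1 / 2) *
              (((fun a => w (Sum.inr a)) - zjl) ⬝ᵥ
                (Laml⁻¹ *ᵥ ((fun a => w (Sum.inr a)) - zjl))))))
        = K * Real.exp (-(1 / 2) * ((w - cc) ⬝ᵥ ((A + Bm) *ᵥ (w - cc)))) := by
    intro w
    simp only [gpdf, ← hAdef, ← hnn]
    rw [hKdef]
    have hexps : Real.exp (-(1 / 2) * ((w - mZ) ⬝ᵥ (A *ᵥ (w - mZ)))) *
        (Real.exp (-(1 / 2) *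
              (((fun a => w (Sum.inl a)) - zik) ⬝ᵥ
                (Lamk⁻¹ *ᵥ ((fun a => w (Sum.inl a)) - zik)))) *
          Real.exp (-(1 / 2) *
              (((fun a => w (Sum.inr a)) - zjl) ⬝ᵥ
                (Laml⁻¹ *ᵥ ((fun a => w (Sum.inr a)) - zjl)))))
        = Real.exp (-(1 / 2) * ((w - cc) ⬝ᵥ ((A + Bm) *ᵥ (w - cc)))) *
          Real.exp (-(1 / 2) * ((Z - mZ) ⬝ᵥ (D *ᵥ (Z - mZ)))) := by
      rw [← Real.exp_add, ← Real.exp_add, ← Real.exp_add]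
      congr 1
      have h1 := hker w
      have h2 := hsquare w
      linarith
    calc (2 * π) ^ (-nn / 2) * SZZ.det ^ (-(1:ℝ) / 2) *
          Real.exp (-(1 / 2) * ((w - mZ) ⬝ᵥ (A *ᵥ (w - mZ)))) *
          ((sigk2 * Real.exp (-(1 / 2) *
              (((fun a => w (Sum.inl a)) - zik) ⬝ᵥ
                (Lamk⁻¹ *ᵥ ((fun a => w (Sum.inl a)) - zik))))) *
            (sigl2 * Real.exp (-(1 / 2) *
              (((fun a => w (Sum.inr a)) - zjl) ⬝ᵥ
                (Laml⁻¹ *ᵥ ((fun a => w (Sum.inr a)) - zjl))))))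
        = sigk2 * sigl2 * (2 * π) ^ (-nn / 2) * SZZ.det ^ (-(1:ℝ) / 2) *
            (Real.exp (-(1 / 2) * ((w - mZ) ⬝ᵥ (A *ᵥ (w - mZ)))) *
              (Real.exp (-(1 / 2) *
                  (((fun a => w (Sum.inl a)) - zik) ⬝ᵥ
                    (Lamk⁻¹ *ᵥ ((fun a => w (Sum.inl a)) - zik)))) *
                Real.exp (-(1 / 2) *
                  (((fun a => w (Sum.inr a)) - zjl) ⬝ᵥ
                    (Laml⁻¹ *ᵥ ((fun a => w (Sum.inr a)) - zjl)))))) := by ring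
      _ = _ := by rw [hexps]; ring
  have hint : (∫ w : (Fin dk ⊕ Fin dl) → ℝ,
      gpdf mZ SZZ w *
          ((sigk2 * Real.exp (-(1 / 2) *
              (((fun a => w (Sum.inl a)) - zik) ⬝ᵥ
                (Lamk⁻¹ *ᵥ ((fun a => w (Sum.inl a)) - zik))))) *
            (sigl2 * Real.exp (-(1 / 2) *
              (((fun a => w (Sum.inr a)) - zjl) ⬝ᵥ
                (Laml⁻¹ *ᵥ ((fun a => w (Sum.inr a)) - zjl)))))))
      = K * ((2 * π) ^ (nn / 2) * (A + Bm).det ^ (-(1:ℝ) / 2)) := by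
    rw [show (fun w : (Fin dk ⊕ Fin dl) → ℝ =>
        gpdf mZ SZZ w *
          ((sigk2 * Real.exp (-(1 / 2) *
              (((fun a => w (Sum.inl a)) - zik) ⬝ᵥ
                (Lamk⁻¹ *ᵥ ((fun a => w (Sum.inl a)) - zik))))) *
            (sigl2 * Real.exp (-(1 / 2) *
              (((fun a => w (Sum.inr a)) - zjl) ⬝ᵥ
                (Laml⁻¹ *ᵥ ((fun a => w (Sum.inr a)) - zjl)))))))
        = fun w => K * Real.exp (-(1/2) * ((w - cc) ⬝ᵥ ((A + Bm) *ᵥ (w - cc))))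
      from funext hpoint]
    rw [MeasureTheory.integral_const_mul, gauss_quad hABpos cc, hnn]
  rw [hint]
  -- final constants computation
  have hpow : (2 * π) ^ (-nn / 2) * (2 * π) ^ (nn / 2) = 1 := by
    rw [← Real.rpow_add (by positivity), show -nn / 2 + nn / 2 = 0 by ring, Real.rpow_zero]
  have hdets : SZZ.det ^ (-(1:ℝ) / 2) * (A + Bm).det ^ (-(1:ℝ) / 2)
      = ((1 : Matrix (Fin dk ⊕ Fin dl) (Fin dk ⊕ Fin dl) ℝ) + SZZ * Bm).det ^ (-(1:ℝ) / 2) := by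
    rw [← Real.mul_rpow hSZZ.det_pos.le hABpos.det_pos.le]
    congr 1
    rw [← Matrix.det_mul, Matrix.mul_add, hSA]
  rw [hKdef]
  calc sigk2 * sigl2 * (2 * π) ^ (-nn / 2) * SZZ.det ^ (-(1:ℝ) / 2) *
        Real.exp (-(1 / 2) * ((Z - mZ) ⬝ᵥ (D *ᵥ (Z - mZ)))) *
        ((2 * π) ^ (nn / 2) * (A + Bm).det ^ (-(1:ℝ) / 2))
      = sigk2 * sigl2 * ((2 * π) ^ (-nn / 2) * (2 * π) ^ (nn / 2)) *
          (SZZ.det ^ (-(1:ℝ) / 2) * (A + Bm).det ^ (-(1:ℝ) / 2)) *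
          Real.exp (-(1 / 2) * ((Z - mZ) ⬝ᵥ (D *ᵥ (Z - mZ)))) := by ring
    _ = _ := by rw [hpow, hdets]; ring
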